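/- For any two functions y, z in the Sobolev space W̊¹₂[0,1] (functions vanishing at 0 and 1 with derivative in L²), the L² norm of the derivative of the product satisfies ‖(ȳz)′‖_{L²[0,1]} ≤ ‖y′‖_{L²[0,1]} · ‖z′‖_{L²[0,1]}. -/

import Mathlib

open MeasureTheory

/-- Cauchy–Schwarz for interval integrals on `[0,1]`. -/
lemma cs_aux (f g : ℝ → ℝ)
    (hf : IntervalIntegrable f volume 0 1) (hg : IntervalIntegrable g volume 0 1)
    (hf2 : IntervalIntegrable (fun t => f t ^ 2) volume 0 1)
    (hg2 : IntervalIntegrable (fun t => g t ^ 2) volume 0 1) :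
    (∫ t in (0:ℝ)..1, |f t| * |g t|)
      ≤ Real.sqrt (∫ t in (0:ℝ)..1, f t ^ 2) * Real.sqrt (∫ t in (0:ℝ)..1, g t ^ 2) := by
  have h01 : (0:ℝ) ≤ 1 := zero_le_one
  rw [intervalIntegral.integral_of_le h01, intervalIntegral.integral_of_le h01,
    intervalIntegral.integral_of_le h01]
  set μ := volume.restrict (Set.Ioc (0:ℝ) 1) with hμ
  have hfm : AEStronglyMeasurable f μ := hf.aestronglyMeasurable
  have hgm : AEStronglyMeasurable g μ := hg.aestronglyMeasurable
  have hfL2 : MemLp f 2 μ := (memLp_two_iff_integrable_sq hfm).2 (by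
    simpa [IntegrableOn] using (intervalIntegrable_iff_integrableOn_Ioc_of_le h01).1 hf2)
  have hgL2 : MemLp g 2 μ := (memLp_two_iff_integrable_sq hgm).2 (by
    simpa [IntegrableOn] using (intervalIntegrable_iff_integrableOn_Ioc_of_le h01).1 hg2)
  have h2 : ENNReal.ofReal (2:ℝ) = 2 := by norm_num
  have hconj : (2:ℝ).HolderConjugate 2 := by
    constructor <;> norm_num
  have key := integral_mul_le_Lp_mul_Lq_of_nonneg hconj
    (Filter.Eventually.of_forall (fun x => abs_nonneg (f x)))
    (Filter.Eventually.of_forall (fun x => abs_nonneg (g x)))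
    (h2 ▸ hfL2.abs) (h2 ▸ hgL2.abs)
  have hfsq : ∀ (h : ℝ → ℝ) (x : ℝ), |h x| ^ (2:ℝ) = h x ^ 2 := fun h x => by
    rw [show ((2:ℝ) = ((2:ℕ):ℝ)) by norm_num, Real.rpow_natCast, sq_abs]
  simp only [hfsq] at key
  have hnn : ∀ (h : ℝ → ℝ), 0 ≤ ∫ a, h a ^ 2 ∂μ := fun h =>
    integral_nonneg (fun a => sq_nonneg _)
  calc ∫ a, |f a| * |g a| ∂μ
      ≤ (∫ a, f a ^ 2 ∂μ) ^ ((1:ℝ)/2) * (∫ a, g a ^ 2 ∂μ) ^ ((1:ℝ)/2) := key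
    _ = Real.sqrt (∫ a, f a ^ 2 ∂μ) * Real.sqrt (∫ a, g a ^ 2 ∂μ) := by
        rw [Real.sqrt_eq_rpow, Real.sqrt_eq_rpow]

/-- Sup-norm bound: `|y x| ≤ ½ ‖y'‖₂` on `[0,1]`. -/
lemma sup_aux (y y' : ℝ → ℝ)
    (hyrep : ∀ x ∈ Set.Icc (0:ℝ) 1, y x = ∫ t in (0:ℝ)..x, y' t)
    (hy1 : y 1 = 0)
    (hy'int : IntervalIntegrable y' volume 0 1)
    (hy'sq : IntervalIntegrable (fun t => y' t ^ 2) volume 0 1) :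
    ∀ x ∈ Set.Icc (0:ℝ) 1, |y x| ≤ (1/2) * Real.sqrt (∫ t in (0:ℝ)..1, y' t ^ 2) := by
  intro x hx
  obtain ⟨hx0, hx1⟩ := hx
  have htot : (∫ t in (0:ℝ)..1, y' t) = 0 := by
    have := hyrep 1 (by constructor <;> norm_num)
    rw [hy1] at this; exact this.symm
  have hIl : IntervalIntegrable y' volume 0 x :=
    hy'int.mono_set (Set.uIcc_subset_uIcc (by simp) (by simp [Set.mem_uIcc]; exact ⟨hx0, hx1⟩))
  have hIr : IntervalIntegrable y' volume x 1 :=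
    hy'int.mono_set (Set.uIcc_subset_uIcc (by simp [Set.mem_uIcc]; exact ⟨hx0, hx1⟩) (by simp))
  have hadd : (∫ t in (0:ℝ)..x, y' t) + (∫ t in x..1, y' t) = ∫ t in (0:ℝ)..1, y' t :=
    intervalIntegral.integral_add_adjacent_intervals hIl hIr
  have h1 : |y x| ≤ ∫ t in (0:ℝ)..x, |y' t| := by
    rw [hyrep x ⟨hx0, hx1⟩]
    exact intervalIntegral.abs_integral_le_integral_abs hx0
  have h2 : |y x| ≤ ∫ t in x..1, |y' t| := by
    have : y x = -(∫ t in x..1, y' t) := by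
      rw [hyrep x ⟨hx0, hx1⟩]; rw [htot] at hadd; linarith
    rw [this, abs_neg]
    exact intervalIntegral.abs_integral_le_integral_abs hx1
  have haddabs : (∫ t in (0:ℝ)..x, |y' t|) + (∫ t in x..1, |y' t|) = ∫ t in (0:ℝ)..1, |y' t| :=
    intervalIntegral.integral_add_adjacent_intervals hIl.abs hIr.abs
  have h3 : 2 * |y x| ≤ ∫ t in (0:ℝ)..1, |y' t| := by
    rw [← haddabs]; linarith
  have h4 : (∫ t in (0:ℝ)..1, |y' t|) ≤ Real.sqrt (∫ t in (0:ℝ)..1, y' t ^ 2) := by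
    have hone : IntervalIntegrable (fun _ : ℝ => (1:ℝ)) volume 0 1 := intervalIntegrable_const
    have honesq : IntervalIntegrable (fun _ : ℝ => (1:ℝ) ^ 2) volume 0 1 := by
      simpa using (intervalIntegrable_const : IntervalIntegrable (fun _ : ℝ => (1:ℝ)) volume 0 1)
    have := cs_aux y' (fun _ => 1) hy'int hone hy'sq honesq
    simpa using this
  linarith

/-- Minkowski inequality for interval integrals on `[0,1]`. -/
lemma mink_aux (f g : ℝ → ℝ)
    (hf : IntervalIntegrable f volume 0 1) (hg : IntervalIntegrable g volume 0 1)
    (hf2 : IntervalIntegrable (fun t => f t ^ 2) volume 0 1)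
    (hg2 : IntervalIntegrable (fun t => g t ^ 2) volume 0 1)
    (hfg : IntervalIntegrable (fun t => f t * g t) volume 0 1) :
    Real.sqrt (∫ t in (0:ℝ)..1, (f t + g t) ^ 2)
      ≤ Real.sqrt (∫ t in (0:ℝ)..1, f t ^ 2) + Real.sqrt (∫ t in (0:ℝ)..1, g t ^ 2) := by
  have h01 : (0:ℝ) ≤ 1 := zero_le_one
  set a := Real.sqrt (∫ t in (0:ℝ)..1, f t ^ 2) with ha
  set b := Real.sqrt (∫ t in (0:ℝ)..1, g t ^ 2) with hb
  have ha0 : 0 ≤ a := Real.sqrt_nonneg _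
  have hb0 : 0 ≤ b := Real.sqrt_nonneg _
  have hfnn : 0 ≤ ∫ t in (0:ℝ)..1, f t ^ 2 :=
    intervalIntegral.integral_nonneg h01 (fun _ _ => sq_nonneg _)
  have hgnn : 0 ≤ ∫ t in (0:ℝ)..1, g t ^ 2 :=
    intervalIntegral.integral_nonneg h01 (fun _ _ => sq_nonneg _)
  have ha2 : a ^ 2 = ∫ t in (0:ℝ)..1, f t ^ 2 := Real.sq_sqrt hfnn
  have hb2 : b ^ 2 = ∫ t in (0:ℝ)..1, g t ^ 2 := Real.sq_sqrt hgnn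
  have hfgabs : IntervalIntegrable (fun t => |f t| * |g t|) volume 0 1 := by
    have := hfg.abs
    simpa [abs_mul] using this
  have hcs : (∫ t in (0:ℝ)..1, f t * g t) ≤ a * b := by
    calc (∫ t in (0:ℝ)..1, f t * g t) ≤ ∫ t in (0:ℝ)..1, |f t| * |g t| := by
          apply intervalIntegral.integral_mono_on h01 hfg hfgabs
          intro x _
          rw [← abs_mul]; exact le_abs_self _
      _ ≤ a * b := cs_aux f g hf hg hf2 hg2
  have hexp : (∫ t in (0:ℝ)..1, (f t + g t) ^ 2)
      = (∫ t in (0:ℝ)..1, f t ^ 2) + ((∫ t in (0:ℝ)..1, 2 * (f t * g t)) + ∫ t in (0:ℝ)..1, g t ^ 2) := by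
    rw [← intervalIntegral.integral_add (hfg.const_mul 2) hg2,
      ← intervalIntegral.integral_add hf2 ((hfg.const_mul 2).add hg2)]
    apply intervalIntegral.integral_congr
    intro x _; ring
  have h2fg : (∫ t in (0:ℝ)..1, 2 * (f t * g t)) = 2 * ∫ t in (0:ℝ)..1, f t * g t :=
    intervalIntegral.integral_const_mul 2 _
  have hle : (∫ t in (0:ℝ)..1, (f t + g t) ^ 2) ≤ (a + b) ^ 2 := by
    rw [hexp, h2fg]
    nlinarith
  calc Real.sqrt (∫ t in (0:ℝ)..1, (f t + g t) ^ 2)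
      ≤ Real.sqrt ((a + b) ^ 2) := Real.sqrt_le_sqrt hle
    _ = a + b := Real.sqrt_sq (add_nonneg ha0 hb0)

lemma bound_aux (f : ℝ → ℝ) (M : ℝ) (hM : 0 ≤ M)
    (hf2 : IntervalIntegrable (fun t => f t ^ 2) volume 0 1)
    (g2 : ℝ → ℝ) (hg2 : IntervalIntegrable (fun t => g2 t) volume 0 1)
    (hbd : ∀ x ∈ Set.Icc (0:ℝ) 1, f x ^ 2 ≤ M ^ 2 * g2 x) :
    Real.sqrt (∫ t in (0:ℝ)..1, f t ^ 2) ≤ M * Real.sqrt (∫ t in (0:ℝ)..1, g2 t) := by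
  have h01 : (0:ℝ) ≤ 1 := zero_le_one
  have h1 : (∫ t in (0:ℝ)..1, f t ^ 2) ≤ ∫ t in (0:ℝ)..1, M ^ 2 * g2 t := by
    apply intervalIntegral.integral_mono_on h01 hf2 (hg2.const_mul _)
    intro x hx; exact hbd x hx
  calc Real.sqrt (∫ t in (0:ℝ)..1, f t ^ 2)
      ≤ Real.sqrt (∫ t in (0:ℝ)..1, M ^ 2 * g2 t) := Real.sqrt_le_sqrt h1
    _ = Real.sqrt (M ^ 2 * ∫ t in (0:ℝ)..1, g2 t) := by
        rw [intervalIntegral.integral_const_mul]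
    _ = M * Real.sqrt (∫ t in (0:ℝ)..1, g2 t) := by
        rw [Real.sqrt_mul (sq_nonneg M), Real.sqrt_sq hM]

/-- For `y, z` in the Sobolev space `W̊¹₂[0,1]` (absolutely continuous with
square-integrable derivative, vanishing at both endpoints), the `L²` norm of the
derivative of the product satisfies `‖(y z)′‖ ≤ ‖y′‖ ⬝ ‖z′‖`. -/
theorem stmt3 (y z y' z' : ℝ → ℝ)
    (hyrep : ∀ x ∈ Set.Icc (0:ℝ) 1, y x = ∫ t in (0:ℝ)..x, y' t)
    (hzrep : ∀ x ∈ Set.Icc (0:ℝ) 1, z x = ∫ t in (0:ℝ)..x, z' t)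
    (hy1 : y 1 = 0) (hz1 : z 1 = 0)
    (hy'int : IntervalIntegrable y' volume 0 1)
    (hz'int : IntervalIntegrable z' volume 0 1)
    (hy'sq : IntervalIntegrable (fun t => y' t ^ 2) volume 0 1)
    (hz'sq : IntervalIntegrable (fun t => z' t ^ 2) volume 0 1) :
    Real.sqrt (∫ t in (0:ℝ)..1, (y' t * z t + y t * z' t) ^ 2)
      ≤ Real.sqrt (∫ t in (0:ℝ)..1, y' t ^ 2) * Real.sqrt (∫ t in (0:ℝ)..1, z' t ^ 2) := by
  have h01 : (0:ℝ) ≤ 1 := zero_le_one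
  have huIcc : Set.uIcc (0:ℝ) 1 = Set.Icc 0 1 := Set.uIcc_of_le h01
  -- continuity of y and z on [0,1]
  have hCy : ContinuousOn y (Set.uIcc (0:ℝ) 1) := by
    apply ContinuousOn.congr (intervalIntegral.continuousOn_primitive_interval
      (by rw [huIcc]; exact (intervalIntegrable_iff_integrableOn_Icc_of_le h01).1 hy'int))
    intro x hx; exact hyrep x (huIcc ▸ hx)
  have hCz : ContinuousOn z (Set.uIcc (0:ℝ) 1) := by
    apply ContinuousOn.congr (intervalIntegral.continuousOn_primitive_interval
      (by rw [huIcc]; exact (intervalIntegrable_iff_integrableOn_Icc_of_le h01).1 hz'int))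
    intro x hx; exact hzrep x (huIcc ▸ hx)
  -- the two factors of the derivative of the product
  set f : ℝ → ℝ := fun t => y' t * z t with hfdef
  set g : ℝ → ℝ := fun t => y t * z' t with hgdef
  have hf : IntervalIntegrable f volume 0 1 := hy'int.mul_continuousOn hCz
  have hg : IntervalIntegrable g volume 0 1 := hz'int.continuousOn_mul hCy
  have hf2 : IntervalIntegrable (fun t => f t ^ 2) volume 0 1 := by
    have : (fun t => f t ^ 2) = fun t => (y' t ^ 2) * (z t * z t) := by
      funext t; simp only [hfdef]; ring
    rw [this]
    exact hy'sq.mul_continuousOn (hCz.mul hCz)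
  have hg2 : IntervalIntegrable (fun t => g t ^ 2) volume 0 1 := by
    have : (fun t => g t ^ 2) = fun t => (z' t ^ 2) * (y t * y t) := by
      funext t; simp only [hgdef]; ring
    rw [this]
    exact hz'sq.mul_continuousOn (hCy.mul hCy)
  have hyz' : IntervalIntegrable (fun t => y' t * z' t) volume 0 1 := by
    apply IntervalIntegrable.mono_fun' (g := fun t => (y' t ^ 2 + z' t ^ 2) / 2)
      ((hy'sq.add hz'sq).div_const 2)
      (hy'int.aestronglyMeasurable.mul hz'int.aestronglyMeasurable |>.mono_measure
        (by rw [Set.uIoc_of_le h01]))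
    apply Filter.Eventually.of_forall
    intro t
    simp only [Real.norm_eq_abs, Pi.mul_apply]
    rw [abs_mul]
    nlinarith [sq_nonneg (|y' t| - |z' t|), sq_abs (y' t), sq_abs (z' t),
      abs_nonneg (y' t), abs_nonneg (z' t)]
  have hfg : IntervalIntegrable (fun t => f t * g t) volume 0 1 := by
    have : (fun t => f t * g t) = fun t => (y' t * z' t) * (y t * z t) := by
      funext t; simp only [hfdef, hgdef]; ring
    rw [this]
    exact hyz'.mul_continuousOn (hCy.mul hCz)
  -- sup bounds
  set My := Real.sqrt (∫ t in (0:ℝ)..1, y' t ^ 2) with hMy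
  set Mz := Real.sqrt (∫ t in (0:ℝ)..1, z' t ^ 2) with hMz
  have hMy0 : 0 ≤ My := Real.sqrt_nonneg _
  have hMz0 : 0 ≤ Mz := Real.sqrt_nonneg _
  have hybd := sup_aux y y' hyrep hy1 hy'int hy'sq
  have hzbd := sup_aux z z' hzrep hz1 hz'int hz'sq
  -- bound each term
  have hfbd : Real.sqrt (∫ t in (0:ℝ)..1, f t ^ 2) ≤ (1/2 * Mz) * My := by
    have := bound_aux f (1/2 * Mz) (by positivity) hf2 (fun t => y' t ^ 2) hy'sq ?_
    · simpa [hMy] using this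
    · intro x hx
      have h1 : |z x| ≤ 1/2 * Mz := hzbd x hx
      have h2 : z x ^ 2 ≤ (1/2 * Mz) ^ 2 := by
        rw [← sq_abs]
        exact pow_le_pow_left₀ (abs_nonneg _) h1 2
      simp only [hfdef]
      nlinarith [sq_nonneg (y' x)]
  have hgbd : Real.sqrt (∫ t in (0:ℝ)..1, g t ^ 2) ≤ (1/2 * My) * Mz := by
    have := bound_aux g (1/2 * My) (by positivity) hg2 (fun t => z' t ^ 2) hz'sq ?_
    · simpa [hMz] using this
    · intro x hx
      have h1 : |y x| ≤ 1/2 * My := hybd x hx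
      have h2 : y x ^ 2 ≤ (1/2 * My) ^ 2 := by
        rw [← sq_abs]
        exact pow_le_pow_left₀ (abs_nonneg _) h1 2
      simp only [hgdef]
      nlinarith [sq_nonneg (z' x)]
  have hmink := mink_aux f g hf hg hf2 hg2 hfg
  have hfinal : Real.sqrt (∫ t in (0:ℝ)..1, (f t + g t) ^ 2) ≤ My * Mz := by
    calc Real.sqrt (∫ t in (0:ℝ)..1, (f t + g t) ^ 2)
        ≤ Real.sqrt (∫ t in (0:ℝ)..1, f t ^ 2) + Real.sqrt (∫ t in (0:ℝ)..1, g t ^ 2) := hmink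
      _ ≤ (1/2 * Mz) * My + (1/2 * My) * Mz := add_le_add hfbd hgbd
      _ = My * Mz := by ring
  simpa [hfdef, hgdef] using hfinal
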